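/- Let D = diag(λ₁,…,λₙ) be a diagonal n×n complex matrix with λ_k > 0 for all k and Σ_{k=1}^n λ_k = 1, let f ∈ F_op, and let A⁽¹⁾,…,A⁽ᴺ⁾ be Hermitian n×n complex matrices. Then det(qCov^{s}_{D,f}) ≥ det(qCov^{as}_{D,f}), where qCov^{s}_{D,f} = Cov_{D,g_f^{s}} and qCov^{as}_{D,f} = Cov_{D,g_f^{as}}. -/

import Mathlib

open ComplexOrder Matrix

/-- The diagonal density matrix `D = diag(λ₁,…,λₙ)`. -/
noncomputable def Dmat {n : ℕ} (lam : Fin n → ℝ) : Matrix (Fin n) (Fin n) ℂ :=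
  Matrix.diagonal fun k => (lam k : ℂ)

/-- `A₀ = A - Tr(D A)·I`. -/
noncomputable def cent {n : ℕ} (lam : Fin n → ℝ) (A : Matrix (Fin n) (Fin n) ℂ) :
    Matrix (Fin n) (Fin n) ℂ :=
  A - (Dmat lam * A).trace • (1 : Matrix (Fin n) (Fin n) ℂ)

/-- The `N×N` covariance matrix `[Cov_{D,g}]_{ij} = (A⁽ⁱ⁾₀, A⁽ʲ⁾₀)_{D,g}` where
`(A,B)_{D,g} = Σ_{k,l} A_{lk}·B_{kl}·g(λ_k,λ_l)`. -/
noncomputable def covM {n N : ℕ} (lam : Fin n → ℝ) (g : ℝ → ℝ → ℝ)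
    (A : Fin N → Matrix (Fin n) (Fin n) ℂ) : Matrix (Fin N) (Fin N) ℂ :=
  Matrix.of fun i j =>
    ∑ k, ∑ l, (g (lam k) (lam l) : ℂ) * cent lam (A i) l k * cent lam (A j) k l
/-- `f ∈ F_op`: `f : (0,∞) → (0,∞)` is operator monotone (via the continuous functional
calculus on Hermitian matrices, with the Loewner order expressed through `PosSemidef`),
satisfies `f(x) = x·f(1/x)` for `x > 0`, and `f(1) = 1`. -/

lemma det_conj_unitary {n : ℕ} {U X : Matrix (Fin n) (Fin n) ℂ}
    (hU : U ∈ Matrix.unitaryGroup (Fin n) ℂ) : (U * X * Uᴴ).det = X.det := by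
  have h1 : U * Uᴴ = 1 := by
    have := Matrix.mem_unitaryGroup_iff.mp hU
    rwa [Matrix.star_eq_conjTranspose] at this
  rw [det_mul, det_mul]
  calc U.det * X.det * Uᴴ.det = X.det * (U * Uᴴ).det := by rw [det_mul]; ring
  _ = X.det := by rw [h1, det_one, mul_one]

lemma psd_det_eq {n : ℕ} {M : Matrix (Fin n) (Fin n) ℂ} (hM : M.PosSemidef) :
    M.det = ((∏ i, hM.1.eigenvalues i : ℝ) : ℂ) := by
  rw [hM.1.det_eq_prod_eigenvalues]; push_cast; rfl

lemma psd_det_re_nonneg {n : ℕ} {M : Matrix (Fin n) (Fin n) ℂ} (hM : M.PosSemidef) :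
    0 ≤ M.det.re := by
  rw [psd_det_eq hM]
  simp only [Complex.ofReal_re]
  exact Finset.prod_nonneg fun i _ => hM.eigenvalues_nonneg i

lemma det_one_add_psd {n : ℕ} {C : Matrix (Fin n) (Fin n) ℂ} (hC : C.PosSemidef) :
    (1 + C).det = ((∏ i, (1 + hC.1.eigenvalues i) : ℝ) : ℂ) := by
  have hspec := hC.1.spectral_theorem
  rw [Unitary.conjStarAlgAut_apply] at hspec
  set U := (hC.1.eigenvectorUnitary : Matrix (Fin n) (Fin n) ℂ) with hUdef
  have h1 : U * Uᴴ = 1 := by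
    have := Matrix.mem_unitaryGroup_iff.mp hC.1.eigenvectorUnitary.2
    rwa [Matrix.star_eq_conjTranspose] at this
  have key : 1 + C = U * (1 + diagonal (RCLike.ofReal ∘ hC.1.eigenvalues)) * Uᴴ := by
    rw [mul_add, add_mul, mul_one, h1, ← Matrix.star_eq_conjTranspose U, ← hspec]
  rw [key, det_conj_unitary hC.1.eigenvectorUnitary.2]
  rw [← diagonal_one, diagonal_add, det_diagonal]
  push_cast
  rfl

lemma det_one_add_psd_re {n : ℕ} {C : Matrix (Fin n) (Fin n) ℂ} (hC : C.PosSemidef) :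
    1 ≤ (1 + C).det.re := by
  rw [det_one_add_psd hC]
  simp only [Complex.ofReal_re]
  calc (1:ℝ) = ∏ _i : Fin n, (1:ℝ) := by simp
  _ ≤ ∏ i, (1 + hC.1.eigenvalues i) := Finset.prod_le_prod (fun i _ => zero_le_one)
      (fun i _ => le_add_of_nonneg_right (hC.eigenvalues_nonneg i))

/-- det monotone under adding a PSD matrix. -/
lemma det_re_le_det_re_add {n : ℕ} {A B : Matrix (Fin n) (Fin n) ℂ}
    (hA : A.PosSemidef) (hB : B.PosSemidef) : A.det.re ≤ (A + B).det.re := by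
  classical
  have hH := hA.1
  set U := (hH.eigenvectorUnitary : Matrix (Fin n) (Fin n) ℂ) with hUdef
  set d := hH.eigenvalues with hd
  have hU2 := hH.eigenvectorUnitary.2
  have h1 : U * Uᴴ = 1 := by
    have := Matrix.mem_unitaryGroup_iff.mp hU2
    rwa [Matrix.star_eq_conjTranspose] at this
  have h2 : Uᴴ * U = 1 := by
    have := Matrix.mem_unitaryGroup_iff'.mp hU2
    rwa [Matrix.star_eq_conjTranspose] at this
  set C := Uᴴ * B * U with hCdef
  have hC : C.PosSemidef := hB.conjTranspose_mul_mul_same U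
  have hBeq : B = U * C * Uᴴ := by
    rw [hCdef]
    calc B = (U * Uᴴ) * B * (U * Uᴴ) := by rw [h1, one_mul, mul_one]
    _ = U * (Uᴴ * B * U) * Uᴴ := by noncomm_ring
  set D := diagonal (RCLike.ofReal ∘ d : Fin n → ℂ) with hDdef
  have hABeq : A + B = U * (D + C) * Uᴴ := by
    rw [mul_add, add_mul, hBeq]
    congr 1
    rw [hH.spectral_theorem, Unitary.conjStarAlgAut_apply, ← Matrix.star_eq_conjTranspose U]
  have hdet1 : (A + B).det = (D + C).det := by rw [hABeq, det_conj_unitary hU2]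
  have hdetA : A.det.re = ∏ i, d i := by
    rw [hH.det_eq_prod_eigenvalues]
    show (∏ i, ((d i : ℝ) : ℂ)).re = ∏ i, d i
    rw [← Complex.ofReal_prod, Complex.ofReal_re]
  rw [hdetA, hdet1]
  have hdnn : ∀ i, 0 ≤ d i := hA.eigenvalues_nonneg
  by_cases hpos : ∀ i, 0 < d i
  · -- all positive: factor out S = diag (sqrt d)
    set s : Fin n → ℂ := fun i => (Real.sqrt (d i) : ℂ) with hs
    set t : Fin n → ℂ := fun i => ((Real.sqrt (d i))⁻¹ : ℂ) with ht
    have hsne : ∀ i, s i ≠ 0 := fun i => by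
      simp [hs, Real.sqrt_ne_zero'.mpr (hpos i)]
    have hst : ∀ i, s i * t i = 1 := fun i => mul_inv_cancel₀ (hsne i)
    set S := diagonal s with hS
    set T := diagonal t with hT
    have hST : S * T = 1 := by
      rw [hS, hT, diagonal_mul_diagonal]
      rw [show (fun i => s i * t i) = fun _ => (1:ℂ) from funext hst, diagonal_one]
    have hTS : T * S = 1 := by
      rw [hS, hT, diagonal_mul_diagonal]
      rw [show (fun i => t i * s i) = fun i => s i * t i from funext fun i => mul_comm _ _,
        show (fun i => s i * t i) = fun _ => (1:ℂ) from funext hst, diagonal_one]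
    have hss : (fun i => s i * s i) = (RCLike.ofReal ∘ d : Fin n → ℂ) := by
      funext i
      show ((Real.sqrt (d i) : ℂ)) * ((Real.sqrt (d i) : ℂ)) = ((d i : ℝ) : ℂ)
      rw [← Complex.ofReal_mul, Real.mul_self_sqrt (hdnn i)]
    have hSS : S * S = D := by
      rw [hS, hDdef, diagonal_mul_diagonal, hss]
    set C' := T * C * T with hC'
    have hstart : star t = t := by
      funext i
      show star (((Real.sqrt (d i) : ℝ) : ℂ)⁻¹) = ((Real.sqrt (d i) : ℝ) : ℂ)⁻¹
      rw [star_inv₀, Complex.star_def, Complex.conj_ofReal]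
    have hTh : Tᴴ = T := by
      rw [hT, diagonal_conjTranspose, hstart]
    have hC'psd : C'.PosSemidef := by
      have h' := hC.conjTranspose_mul_mul_same T
      rw [hTh] at h'
      exact h'
    have hfact : D + C = S * (1 + C') * S := by
      rw [mul_add, add_mul, mul_one, hSS, hC']
      congr 1
      symm
      calc S * (T * C * T) * S = (S * T) * C * (T * S) := by noncomm_ring
      _ = C := by rw [hST, hTS, one_mul, mul_one]
    have hdetS : S.det = ((∏ i, Real.sqrt (d i) : ℝ) : ℂ) := by
      rw [hS, det_diagonal]; push_cast; rfl
    rw [hfact, det_mul, det_mul, hdetS, det_one_add_psd hC'psd]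
    rw [show ((∏ i, Real.sqrt (d i) : ℝ) : ℂ) * ((∏ i, (1 + hC'psd.1.eigenvalues i) : ℝ) : ℂ)
        * ((∏ i, Real.sqrt (d i) : ℝ) : ℂ)
        = (((∏ i, Real.sqrt (d i)) * (∏ i, (1 + hC'psd.1.eigenvalues i))
          * (∏ i, Real.sqrt (d i)) : ℝ) : ℂ) by push_cast; ring]
    simp only [Complex.ofReal_re]
    have hsq : (∏ i, Real.sqrt (d i)) * (∏ i, Real.sqrt (d i)) = ∏ i, d i := by
      rw [← Finset.prod_mul_distrib]
      exact Finset.prod_congr rfl fun i _ => Real.mul_self_sqrt (hdnn i)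
    have key : (∏ i, Real.sqrt (d i)) * (∏ i, (1 + hC'psd.1.eigenvalues i))
        * (∏ i, Real.sqrt (d i)) = (∏ i, d i) * ∏ i, (1 + hC'psd.1.eigenvalues i) := by
      rw [← hsq]; ring
    rw [key]
    refine le_mul_of_one_le_right (Finset.prod_nonneg fun i _ => hdnn i) ?_
    calc (1:ℝ) = ∏ _i : Fin n, (1:ℝ) := by simp
    _ ≤ ∏ i, (1 + hC'psd.1.eigenvalues i) := Finset.prod_le_prod (fun i _ => zero_le_one)
        (fun i _ => le_add_of_nonneg_right (hC'psd.eigenvalues_nonneg i))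
  · -- some eigenvalue is zero
    push_neg at hpos
    obtain ⟨i0, hi0⟩ := hpos
    have hzero : d i0 = 0 := le_antisymm hi0 (hdnn i0)
    have hprod : ∏ j, d j = 0 := Finset.prod_eq_zero (Finset.mem_univ i0) hzero
    rw [hprod]
    have hDpsd : D.PosSemidef := by
      rw [hDdef]
      exact PosSemidef.diagonal fun j => Complex.zero_le_real.mpr (hdnn j)
    exact psd_det_re_nonneg (hDpsd.add hC)

lemma cent_isHermitian {n : ℕ} (lam : Fin n → ℝ) {A : Matrix (Fin n) (Fin n) ℂ}
    (hA : A.IsHermitian) : (cent lam A).IsHermitian := by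
  have htr : (Dmat lam * A).trace = ∑ k, (lam k : ℂ) * A k k := by
    simp [Matrix.trace, Matrix.diag, Dmat, Matrix.diagonal_mul]
  have hAd : ∀ k, star (A k k) = A k k := fun k => by
    conv_rhs => rw [← hA.apply k k]
  have ht : star ((Dmat lam * A).trace) = (Dmat lam * A).trace := by
    rw [htr, star_sum]
    refine Finset.sum_congr rfl fun k _ => ?_
    rw [star_mul', hAd, Complex.star_def, Complex.conj_ofReal]
  show (A - (Dmat lam * A).trace • (1 : Matrix (Fin n) (Fin n) ℂ)).IsHermitian
  refine hA.sub ?_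
  show ((Dmat lam * A).trace • (1 : Matrix (Fin n) (Fin n) ℂ))ᴴ = _
  rw [conjTranspose_smul, conjTranspose_one, ht]

lemma covM_add_g {n N : ℕ} (lam : Fin n → ℝ) (g1 g2 : ℝ → ℝ → ℝ)
    (A : Fin N → Matrix (Fin n) (Fin n) ℂ) :
    covM lam (fun x y => g1 x y + g2 x y) A = covM lam g1 A + covM lam g2 A := by
  ext i j
  simp only [covM, of_apply, Matrix.add_apply]
  rw [← Finset.sum_add_distrib]
  refine Finset.sum_congr rfl fun k _ => ?_
  rw [← Finset.sum_add_distrib]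
  refine Finset.sum_congr rfl fun l _ => ?_
  push_cast
  ring

lemma swap4 {n N : ℕ} (F : Fin N → Fin N → Fin n → Fin n → ℂ) :
    ∑ i, ∑ j, ∑ k, ∑ l, F i j k l = ∑ k, ∑ l, ∑ i, ∑ j, F i j k l := by
  calc ∑ i, ∑ j, ∑ k, ∑ l, F i j k l
      = ∑ i, ∑ k, ∑ j, ∑ l, F i j k l :=
        Finset.sum_congr rfl fun i _ => Finset.sum_comm
    _ = ∑ k, ∑ i, ∑ j, ∑ l, F i j k l := Finset.sum_comm
    _ = ∑ k, ∑ i, ∑ l, ∑ j, F i j k l :=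
        Finset.sum_congr rfl fun k _ => Finset.sum_congr rfl fun i _ => Finset.sum_comm
    _ = ∑ k, ∑ l, ∑ i, ∑ j, F i j k l :=
        Finset.sum_congr rfl fun k _ => Finset.sum_comm

lemma covM_posSemidef {n N : ℕ} (lam : Fin n → ℝ) (g : ℝ → ℝ → ℝ)
    (hg : ∀ k l : Fin n, 0 ≤ g (lam k) (lam l))
    (A : Fin N → Matrix (Fin n) (Fin n) ℂ) (hA : ∀ a, (A a).IsHermitian) :
    (covM lam g A).PosSemidef := by
  have hc : ∀ a, (cent lam (A a)).IsHermitian := fun a => cent_isHermitian lam (hA a)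
  have h2 : ∀ a (k l : Fin n), star (cent lam (A a) k l) = cent lam (A a) l k := by
    intro a k l
    conv_rhs => rw [← (hc a).apply l k]
  rw [posSemidef_iff_dotProduct_mulVec]
  constructor
  · ext i j
    rw [conjTranspose_apply]
    simp only [covM, of_apply, star_sum]
    refine Finset.sum_congr rfl fun k _ => ?_
    refine Finset.sum_congr rfl fun l _ => ?_
    rw [star_mul', star_mul', h2, h2, Complex.star_def, Complex.conj_ofReal]
    ring
  · intro x
    have key : dotProduct (star x) ((covM lam g A) *ᵥ x)
        = ∑ k, ∑ l, (g (lam k) (lam l) : ℂ) *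
            (star (∑ j, x j * cent lam (A j) k l) * (∑ j, x j * cent lam (A j) k l)) := by
      calc dotProduct (star x) ((covM lam g A) *ᵥ x)
          = ∑ i, ∑ j, ∑ k, ∑ l, (star (x i) * ((g (lam k) (lam l) : ℂ)
              * cent lam (A i) l k * cent lam (A j) k l * x j)) := by
            simp only [dotProduct, mulVec, covM, of_apply, Pi.star_apply,
              Finset.mul_sum, Finset.sum_mul]
        _ = ∑ k, ∑ l, ∑ i, ∑ j, (star (x i) * ((g (lam k) (lam l) : ℂ)
              * cent lam (A i) l k * cent lam (A j) k l * x j)) := swap4 _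
        _ = ∑ k, ∑ l, (g (lam k) (lam l) : ℂ) *
            (star (∑ j, x j * cent lam (A j) k l) * (∑ j, x j * cent lam (A j) k l)) := by
            refine Finset.sum_congr rfl fun k _ => Finset.sum_congr rfl fun l _ => ?_
            rw [star_sum, Finset.sum_mul_sum, Finset.mul_sum]
            refine Finset.sum_congr rfl fun i _ => ?_
            rw [Finset.mul_sum]
            refine Finset.sum_congr rfl fun j _ => ?_
            rw [star_mul', h2]
            ring
    rw [key]
    refine Finset.sum_nonneg fun k _ => Finset.sum_nonneg fun l _ => ?_
    refine mul_nonneg ?_ (star_mul_self_nonneg _)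
    exact Complex.zero_le_real.mpr (hg k l)

structure IsFop (f : ℝ → ℝ) : Prop where
  pos : ∀ x : ℝ, 0 < x → 0 < f x
  opMono : ∀ (m : ℕ) (X Y : Matrix (Fin m) (Fin m) ℂ), X.PosSemidef → Y.PosSemidef →
    (Y - X).PosSemidef → (cfc f Y - cfc f X).PosSemidef
  funcEq : ∀ x : ℝ, 0 < x → f x = x * f x⁻¹
  normalized : f 1 = 1

/-- `f(0) = lim_{t→0⁺} f(t)`. -/
def IsFzero (f : ℝ → ℝ) (f0 : ℝ) : Prop :=
  Filter.Tendsto f (nhdsWithin 0 (Set.Ioi 0)) (nhds f0)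

/-- `m_f(x,y) = y·f(x/y)`. -/
noncomputable def mfun (f : ℝ → ℝ) (x y : ℝ) : ℝ := y * f (x / y)

/-- `g_cl(x,y) = (x+y)/2`. -/
noncomputable def gcl (x y : ℝ) : ℝ := (x + y) / 2

/-- `g_f^{as}(x,y) = f(0)·(x−y)²/(2·m_f(x,y))`. -/
noncomputable def gas (f : ℝ → ℝ) (f0 : ℝ) (x y : ℝ) : ℝ :=
  f0 * (x - y) ^ 2 / (2 * mfun f x y)

/-- `g_f^{s}(x,y) = f(0)·(x+y)²/(2·m_f(x,y))`. -/
noncomputable def gs (f : ℝ → ℝ) (f0 : ℝ) (x y : ℝ) : ℝ :=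
  f0 * (x + y) ^ 2 / (2 * mfun f x y)

/-- `det(qCov^{s}_{D,f}) ≥ det(qCov^{as}_{D,f})`. -/
theorem det_qCov_s_ge_det_qCov_as (n N : ℕ) (lam : Fin n → ℝ)
    (hlam : ∀ k, 0 < lam k) (hsum : ∑ k, lam k = 1)
    (f : ℝ → ℝ) (hf : IsFop f) (f0 : ℝ) (hf0 : IsFzero f f0)
    (A : Fin N → Matrix (Fin n) (Fin n) ℂ) (hA : ∀ a, (A a).IsHermitian) :
    (covM lam (gas f f0) A).det.re ≤ (covM lam (gs f f0) A).det.re := by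
  classical
  -- f0 ≥ 0
  have hf0nn : 0 ≤ f0 := by
    refine ge_of_tendsto hf0 ?_
    filter_upwards [self_mem_nhdsWithin] with x hx
    exact (hf.pos x hx).le
  -- m_f positive at positive points
  have hm : ∀ x y : ℝ, 0 < x → 0 < y → 0 < mfun f x y := fun x y hx hy =>
    mul_pos hy (hf.pos _ (div_pos hx hy))
  -- gas is nonneg at the eigenvalues
  have hgas : ∀ k l : Fin n, 0 ≤ gas f f0 (lam k) (lam l) := fun k l => by
    unfold gas
    exact div_nonneg (mul_nonneg hf0nn (sq_nonneg _))
      (by linarith [hm (lam k) (lam l) (hlam k) (hlam l)])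
  set h : ℝ → ℝ → ℝ := fun x y => gs f f0 x y - gas f f0 x y with hh_def
  have hh : ∀ k l : Fin n, 0 ≤ h (lam k) (lam l) := fun k l => by
    have hmpos := hm (lam k) (lam l) (hlam k) (hlam l)
    have : h (lam k) (lam l) = f0 * (4 * lam k * lam l) / (2 * mfun f (lam k) (lam l)) := by
      show gs f f0 (lam k) (lam l) - gas f f0 (lam k) (lam l) = _
      unfold gs gas
      rw [div_sub_div_same]
      congr 1
      ring
    rw [this]
    refine div_nonneg (mul_nonneg hf0nn ?_) (by linarith)
    have := (hlam k).le
    have := (hlam l).le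
    positivity
  have hsplit : covM lam (gs f f0) A = covM lam (gas f f0) A + covM lam h A := by
    have heq : (fun x y => gas f f0 x y + h x y) = gs f f0 := by
      funext x y
      show gas f f0 x y + (gs f f0 x y - gas f f0 x y) = gs f f0 x y
      ring
    rw [← heq, covM_add_g]
  rw [hsplit]
  exact det_re_le_det_re_add (covM_posSemidef lam _ hgas A hA) (covM_posSemidef lam _ hh A hA)
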